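/- arXiv:1108.3768 — 9 statements merged into one kernel-verified Lean document; each statement's English description precedes it below -/
import Mathlib

section
/- Fix real parameters p, r with 0 < r < p < 1, define b_{0,l} = (r − r(p−r)^l)/(1+r−p) for integers l ≥ 1, and define V(ω,l) = (b_{0,l} + ω(1−p)(l−1)) / (b_{0,l} + (1−p)l) for ω ∈ ℝ and integer l ≥ 1. Then for every integer l ≥ 1: (i) the quantity 1 − p + (b_{0,l} − b_{0,l+1})·l + b_{0,l+1} is strictly positive, and (ii) the number W(l) = ((b_{0,l} − b_{0,l+1})(l+1) + b_{0,l+1}) / (1 − p + (b_{0,l} − b_{0,l+1})·l + b_{0,l+1}) is the unique real solution ω of the indifference equation V(ω,l) = V(ω,l+1). -/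
lemma aux_pow_ineq (q : ℝ) (h0 : 0 ≤ q) (h1 : q ≤ 1) :
    ∀ l : ℕ, (l : ℝ) * q ^ l * (1 - q) ≤ q - q ^ (l + 1) := by
  intro l
  induction l with
  | zero => simp
  | succ n ih =>
    have hq : q ^ n * q ≤ q ^ n := by nlinarith [pow_nonneg h0 n]
    push_cast
    push_cast at ih
    simp only [pow_succ] at *
    have h2 : 0 ≤ (n : ℝ) * (q ^ n - q ^ n * q) * (1 - q) :=
      mul_nonneg (mul_nonneg (Nat.cast_nonneg n) (by linarith)) (by linarith)
    nlinarith [pow_nonneg h0 n]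

/-- The Whittle index `W(l)` is the unique subsidy `ω` solving the indifference
equation `V(ω,l) = V(ω,l+1)` between the threshold policies at `b_{0,l}` and
`b_{0,l+1}`, and the denominator in its expression is strictly positive. -/
theorem stmt_8 (p r : ℝ) (hr : 0 < r) (hrp : r < p) (hp : p < 1)
    (b : ℕ → ℝ) (hb : ∀ l, b l = (r - r * (p - r) ^ l) / (1 + r - p))
    (V : ℝ → ℕ → ℝ)
    (hV : ∀ (ω : ℝ) (l : ℕ), V ω l = (b l + ω * (1 - p) * ((l : ℝ) - 1)) / (b l + (1 - p) * (l : ℝ)))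
    (W : ℕ → ℝ)
    (hW : ∀ l, W l = ((b l - b (l + 1)) * ((l : ℝ) + 1) + b (l + 1)) /
      (1 - p + (b l - b (l + 1)) * (l : ℝ) + b (l + 1))) :
    ∀ l : ℕ, 1 ≤ l →
      0 < 1 - p + (b l - b (l + 1)) * (l : ℝ) + b (l + 1) ∧
      (∀ ω : ℝ, V ω l = V ω (l + 1) ↔ ω = W l) := by
  intro l hl
  have hq0 : 0 < p - r := sub_pos.2 hrp
  have hq1 : p - r < 1 := by linarith
  have h1q : 0 < 1 + r - p := by linarith
  have h1p : 0 < 1 - p := by linarith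
  have hbval : ∀ m : ℕ, b m * (1 + r - p) = r - r * (p - r) ^ m := by
    intro m
    rw [hb]
    field_simp
  have hΔ : b l - b (l + 1) = -(r * (p - r) ^ l) := by
    have h1 := hbval l
    have h2 := hbval (l + 1)
    have key : (b l - b (l + 1)) * (1 + r - p) = -(r * (p - r) ^ l) * (1 + r - p) := by
      linear_combination h1 - h2
    exact mul_right_cancel₀ h1q.ne' key
  have haux := aux_pow_ineq (p - r) hq0.le hq1.le l
  have hD : 0 < 1 - p + (b l - b (l + 1)) * (l : ℝ) + b (l + 1) := by
    have hmul : (1 - p + r) * (1 + r - p) ≤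
        (1 - p + (b l - b (l + 1)) * (l : ℝ) + b (l + 1)) * (1 + r - p) := by
      rw [hΔ]
      have hprod := mul_le_mul_of_nonneg_left haux hr.le
      nlinarith [hbval (l + 1)]
    have := le_of_mul_le_mul_right hmul h1q
    linarith
  refine ⟨hD, ?_⟩
  intro ω
  have hbnn : ∀ m : ℕ, 0 ≤ b m := by
    intro m
    rw [hb]
    apply div_nonneg _ h1q.le
    nlinarith [pow_le_one₀ hq0.le hq1.le (n := m)]
  have hl1 : (1 : ℝ) ≤ (l : ℝ) := by exact_mod_cast hl
  have hA : 0 < b l + (1 - p) * (l : ℝ) := by nlinarith [hbnn l]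
  have hA' : 0 < b (l + 1) + (1 - p) * ((l + 1 : ℕ) : ℝ) := by
    push_cast
    nlinarith [hbnn (l + 1)]
  rw [hV, hV, hW, div_eq_div_iff hA.ne' hA'.ne', eq_div_iff hD.ne']
  push_cast
  constructor
  · intro h
    have h2 : (1 - p) * (((b l - b (l + 1)) * ((l : ℝ) + 1) + b (l + 1)) -
        ω * (1 - p + (b l - b (l + 1)) * (l : ℝ) + b (l + 1))) = 0 := by
      linear_combination h
    rcases mul_eq_zero.mp h2 with h3 | h3
    · linarith
    · linarith
  · intro h
    linear_combination (p - 1) * h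
end

section
/- Fix real parameters p, r with 0 < r < p < 1, define b_{0,l} = (r − r(p−r)^l)/(1+r−p) for integers l ≥ 1, and define the Whittle index W(l) = ((b_{0,l} − b_{0,l+1})(l+1) + b_{0,l+1}) / (1 − p + (b_{0,l} − b_{0,l+1})·l + b_{0,l+1}). Then for every integer l ≥ 1, 0 ≤ W(l) ≤ 1, the sequence (W(l)) is monotonically increasing in l, and W(l) ≤ r/((1−p)(1+r−p)+r) for all l. -/
/-- The Whittle index values `W(l)` lie in `[0,1]`, are monotonically increasing in `l`,
and are bounded above by `r/((1-p)(1+r-p)+r)`. -/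
theorem stmt_9 (p r : ℝ) (hr : 0 < r) (hrp : r < p) (hp : p < 1)
    (b : ℕ → ℝ) (hb : ∀ l, b l = (r - r * (p - r) ^ l) / (1 + r - p))
    (W : ℕ → ℝ)
    (hW : ∀ l, W l = ((b l - b (l + 1)) * ((l : ℝ) + 1) + b (l + 1)) /
      (1 - p + (b l - b (l + 1)) * (l : ℝ) + b (l + 1))) :
    (∀ l : ℕ, 1 ≤ l → 0 ≤ W l ∧ W l ≤ 1) ∧
    (∀ l : ℕ, 1 ≤ l → W l ≤ W (l + 1)) ∧
    (∀ l : ℕ, 1 ≤ l → W l ≤ r / ((1 - p) * (1 + r - p) + r)) := by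
  set q : ℝ := p - r with hq
  have hq0 : 0 < q := by simp [hq]; linarith
  have hq1 : q < 1 := by simp [hq]; linarith
  have h1q : 0 < 1 - q := by linarith
  have h1p : 0 < 1 - p := by linarith
  have hql : ∀ l : ℕ, 0 < q ^ l := fun l => pow_pos hq0 l
  have hdivpos : ∀ x : ℝ, 0 ≤ x * (1 - q) → 0 ≤ x := by
    intro x hx; by_contra hc; push_neg at hc; nlinarith
  have hbq : ∀ l, b l * (1 - q) = r - r * q ^ l := by
    intro l
    have he : (1:ℝ) + r - p = 1 - q := by rw [hq]; ring
    rw [hb l, he, div_mul_cancel₀ _ (ne_of_gt h1q)]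
  have bdiff : ∀ l, b l - b (l + 1) = -(r * q ^ l) := by
    intro l
    have h1 := hbq l
    have h2 := hbq (l + 1)
    have key : (b l - b (l + 1)) * (1 - q) = (-(r * q ^ l)) * (1 - q) := by
      rw [pow_succ] at h2
      nlinarith [h1, h2]
    exact mul_right_cancel₀ (ne_of_gt h1q) key
  set A : ℕ → ℝ := fun l => 1 - ((l : ℝ) + 1) * q ^ l + (l : ℝ) * q ^ (l + 1) with hAdef
  have keyA : ∀ n : ℕ, A (n + 1) = A n + ((n : ℝ) + 1) * q ^ n * (1 - q) ^ 2 := by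
    intro n
    simp only [hAdef]
    push_cast
    ring
  have hA : ∀ l, 0 ≤ A l := by
    intro l
    induction l with
    | zero => simp [hAdef]
    | succ n ih =>
      rw [keyA n]
      have : 0 ≤ ((n : ℝ) + 1) * q ^ n * (1 - q) ^ 2 := by positivity
      linarith
  have hA1 : ∀ l, A l ≤ 1 := by
    intro l
    simp only [hAdef]
    have h1 : (0:ℝ) ≤ (l : ℝ) := Nat.cast_nonneg l
    have h2 : q ^ (l + 1) = q ^ l * q := pow_succ q l
    rw [h2]
    nlinarith [mul_nonneg (mul_nonneg h1 (hql l).le) h1q.le, hql l]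
  set N : ℕ → ℝ := fun l => -(r * q ^ l) * ((l : ℝ) + 1) + b (l + 1) with hNdef
  set D : ℕ → ℝ := fun l => 1 - p + (-(r * q ^ l)) * (l : ℝ) + b (l + 1) with hDdef
  have hWND : ∀ l, W l = N l / D l := by
    intro l
    rw [hW l, bdiff l]
  have hNq : ∀ l, N l * (1 - q) = r * A l := by
    intro l
    have h := hbq (l + 1)
    simp only [hNdef, hAdef]
    rw [pow_succ] at h ⊢
    linear_combination h
  have hN0 : ∀ l, 0 ≤ N l := by
    intro l
    apply hdivpos
    rw [hNq l]
    exact mul_nonneg hr.le (hA l)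
  have hDN : ∀ l, D l = N l + (1 - p) + r * q ^ l := by
    intro l; simp only [hNdef, hDdef]; ring
  have hD0 : ∀ l, 0 < D l := by
    intro l
    rw [hDN l]
    have := hN0 l
    have := mul_pos hr (hql l)
    linarith
  have hNmono : ∀ l, N l ≤ N (l + 1) := by
    intro l
    have h : (N (l + 1) - N l) * (1 - q) = r * (((l : ℝ) + 1) * q ^ l * (1 - q) ^ 2) := by
      rw [sub_mul, hNq, hNq, keyA l]
      ring
    have h2 : 0 ≤ (N (l + 1) - N l) * (1 - q) := by
      rw [h]; positivity
    have := hdivpos _ h2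
    linarith
  refine ⟨?_, ?_, ?_⟩
  · intro l _
    rw [hWND l]
    constructor
    · exact div_nonneg (hN0 l) (hD0 l).le
    · rw [div_le_one (hD0 l)]
      rw [hDN l]
      have := mul_pos hr (hql l)
      linarith
  · intro l _
    rw [hWND l, hWND (l + 1), div_le_div_iff₀ (hD0 l) (hD0 (l + 1))]
    rw [hDN l, hDN (l + 1)]
    have hc : r * q ^ (l + 1) ≤ r * q ^ l := by
      have : q ^ (l + 1) ≤ q ^ l := by
        rw [pow_succ]; nlinarith [hql l]
      nlinarith
    have e1 : N l * ((1 - p) + r * q ^ (l + 1)) ≤ N (l + 1) * ((1 - p) + r * q ^ (l + 1)) := by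
      apply mul_le_mul_of_nonneg_right (hNmono l)
      have := mul_pos hr (hql (l + 1)); linarith
    have e2 : N (l + 1) * ((1 - p) + r * q ^ (l + 1)) ≤ N (l + 1) * ((1 - p) + r * q ^ l) := by
      apply mul_le_mul_of_nonneg_left _ (hN0 (l + 1))
      linarith
    nlinarith [e1, e2]
  · intro l _
    have h1qe : (1:ℝ) + r - p = 1 - q := by rw [hq]; ring
    rw [hWND l, h1qe]
    have hK0 : 0 < (1 - p) * (1 - q) + r := by nlinarith
    rw [div_le_div_iff₀ (hD0 l) hK0]
    have hstep : N l * (1 - q) ≤ r := by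
      rw [hNq l]
      nlinarith [hA1 l]
    have hstep2 : (N l * (1 - q)) * (1 - p) ≤ r * (1 - p) :=
      mul_le_mul_of_nonneg_right hstep h1p.le
    rw [hDN l]
    nlinarith [hstep2, mul_pos (mul_pos hr hr) (hql l)]
end

section
/- Fix real parameters p, r with 0 < r < p < 1, define b_{0,l} = (r − r(p−r)^l)/(1+r−p) for integers l ≥ 1, and define the Whittle index W(l) = ((b_{0,l} − b_{0,l+1})(l+1) + b_{0,l+1}) / (1 − p + (b_{0,l} − b_{0,l+1})·l + b_{0,l+1}). Then lim_{l→∞} W(l) = r / ((1−p)(1+r−p) + r). (This limit is the Whittle index assigned to every belief state π with b_s ≤ π ≤ p, where b_s = r/(1+r−p).) -/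
open Filter

/-- The Whittle index values `W(l)` converge, as `l → ∞`, to
`r / ((1-p)(1+r-p) + r)`, the index assigned to every belief state `π` with
`b_s ≤ π ≤ p`. -/
theorem stmt_10 (p r : ℝ) (hr : 0 < r) (hrp : r < p) (hp : p < 1)
    (b : ℕ → ℝ) (hb : ∀ l, b l = (r - r * (p - r) ^ l) / (1 + r - p))
    (W : ℕ → ℝ)
    (hW : ∀ l, W l = ((b l - b (l + 1)) * ((l : ℝ) + 1) + b (l + 1)) /
      (1 - p + (b l - b (l + 1)) * (l : ℝ) + b (l + 1))) :
    Filter.Tendsto W Filter.atTop (nhds (r / ((1 - p) * (1 + r - p) + r))) := by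
  have hD : 0 < 1 + r - p := by linarith
  have hDne : (1 + r - p) ≠ 0 := ne_of_gt hD
  have hq0 : (0:ℝ) ≤ p - r := by linarith
  have hq1 : p - r < 1 := by linarith
  have hdiff : ∀ l, b l - b (l + 1) = -(r * (p - r) ^ l) := by
    intro l
    rw [hb, hb, pow_succ]
    field_simp
    ring
  have h1 : Tendsto (fun l : ℕ => (p - r) ^ l) atTop (nhds 0) :=
    tendsto_pow_atTop_nhds_zero_of_lt_one hq0 hq1
  have h2 : Tendsto (fun l : ℕ => (l : ℝ) * (p - r) ^ l) atTop (nhds 0) :=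
    tendsto_self_mul_const_pow_of_lt_one hq0 hq1
  have hbL : Tendsto (fun l : ℕ => b (l + 1)) atTop (nhds (r / (1 + r - p))) := by
    have : Tendsto (fun l : ℕ => (r - r * ((p - r) * (p - r) ^ l)) / (1 + r - p))
        atTop (nhds ((r - r * ((p - r) * 0)) / (1 + r - p))) :=
      ((tendsto_const_nhds.sub ((h1.const_mul (p - r)).const_mul r)).div_const _)
    simp only [mul_zero, sub_zero] at this
    convert this using 2 with l
    rw [hb, pow_succ]
    ring_nf
  have hnum : Tendsto (fun l : ℕ => (b l - b (l + 1)) * ((l : ℝ) + 1) + b (l + 1))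
      atTop (nhds (r / (1 + r - p))) := by
    have hT : Tendsto (fun l : ℕ =>
        -(r * (p - r) ^ l) * ((l : ℝ) + 1) + b (l + 1))
        atTop (nhds (0 + r / (1 + r - p))) := by
      apply Tendsto.add _ hbL
      have : Tendsto (fun l : ℕ =>
          (-r) * ((l : ℝ) * (p - r) ^ l) + (-r) * (p - r) ^ l) atTop
          (nhds ((-r) * 0 + (-r) * 0)) :=
        (h2.const_mul (-r)).add (h1.const_mul (-r))
      simp only [mul_zero, add_zero] at this
      convert this using 2 with l
      ring
    simp only [zero_add] at hT
    convert hT using 2 with l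
    rw [hdiff]
  have hden : Tendsto (fun l : ℕ => 1 - p + (b l - b (l + 1)) * (l : ℝ) + b (l + 1))
      atTop (nhds (1 - p + r / (1 + r - p))) := by
    have hT : Tendsto (fun l : ℕ =>
        (1 - p + (-r) * ((l : ℝ) * (p - r) ^ l)) + b (l + 1)) atTop
        (nhds ((1 - p + (-r) * 0) + r / (1 + r - p))) :=
      (tendsto_const_nhds.add (h2.const_mul (-r))).add hbL
    simp only [mul_zero, add_zero] at hT
    convert hT using 2 with l
    rw [hdiff]
    ring
  have hdne : 1 - p + r / (1 + r - p) ≠ 0 := by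
    have : 0 < r / (1 + r - p) := div_pos hr hD
    have : 0 < 1 - p + r / (1 + r - p) := by linarith
    exact ne_of_gt this
  have hWt : Tendsto W atTop
      (nhds ((r / (1 + r - p)) / (1 - p + r / (1 + r - p)))) := by
    have := hnum.div hden hdne
    apply this.congr
    intro l
    simp only [Pi.div_apply]
    rw [hW]
  have key : r / (1 + r - p) / (1 - p + r / (1 + r - p))
      = r / ((1 - p) * (1 + r - p) + r) := by
    rw [div_div]
    congr 1
    field_simp
  rwa [key] at hWt
end

section
/- Fix real parameters p, r with 0 < r < p < 1, define b_{0,h} = (r − r(p−r)^h)/(1+r−p) for integers h ≥ 1, and define the activation fraction A(h,ρ) = 1 − (1−p)(h−ρ) / (ρ·b_{0,h} + (1−ρ)·b_{0,h+1} + (1−p)(h+1−ρ)) for integers h ≥ 1 and ρ ∈ [0,1]. Then: (i) A(h,0) = A(h+1,1) for every h ≥ 1; (ii) for every fixed h ≥ 1, the function ρ ↦ A(h,ρ) is strictly increasing on [0,1]; (iii) A(1,1) = 1; and (iv) 0 < A(h,ρ) ≤ 1 for all h ≥ 1 and ρ ∈ [0,1]. -/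
lemma aux_pow (q : ℝ) (h0 : 0 < q) :
    ∀ n : ℕ, 1 ≤ n → q ^ n * (q + n * (1 - q)) ≤ q := by
  intro n hn
  induction n, hn using Nat.le_induction with
  | base => push_cast; nlinarith
  | succ n hn ih =>
    have hpn : (0:ℝ) ≤ q ^ n := pow_nonneg h0.le n
    have hcn : (0:ℝ) ≤ (n:ℝ) := Nat.cast_nonneg n
    have step : q ^ (n+1) * (q + (n+1:ℕ) * (1 - q)) ≤ q ^ n * (q + n * (1 - q)) := by
      push_cast
      rw [pow_succ]
      nlinarith [mul_nonneg hpn (mul_nonneg hcn (sq_nonneg (1-q)))]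
    exact step.trans ih

/-- Properties of the long-run activation fraction `A(h,ρ)` of the randomized
threshold policy with threshold `b_{0,h}` and randomization `ρ`:
(i) `A(h,0) = A(h+1,1)`; (ii) `ρ ↦ A(h,ρ)` is strictly increasing on `[0,1]`;
(iii) `A(1,1) = 1`; (iv) `0 < A(h,ρ) ≤ 1`. -/
theorem stmt_11 (p r : ℝ) (hr : 0 < r) (hrp : r < p) (hp : p < 1)
    (b : ℕ → ℝ) (hb : ∀ l, b l = (r - r * (p - r) ^ l) / (1 + r - p))
    (A : ℕ → ℝ → ℝ)
    (hA : ∀ (h : ℕ) (ρ : ℝ), A h ρ =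
      1 - (1 - p) * ((h : ℝ) - ρ) /
        (ρ * b h + (1 - ρ) * b (h + 1) + (1 - p) * ((h : ℝ) + 1 - ρ))) :
    (∀ h : ℕ, 1 ≤ h → A h 0 = A (h + 1) 1) ∧
    (∀ h : ℕ, 1 ≤ h → StrictMonoOn (A h) (Set.Icc (0 : ℝ) 1)) ∧
    (A 1 1 = 1) ∧
    (∀ h : ℕ, 1 ≤ h → ∀ ρ ∈ Set.Icc (0 : ℝ) 1, 0 < A h ρ ∧ A h ρ ≤ 1) := by
  have hq0 : 0 < p - r := sub_pos.mpr hrp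
  have hq1 : p - r < 1 := by linarith
  have hd : 0 < 1 + r - p := by linarith
  have ha : 0 < 1 - p := by linarith
  -- b is nonnegative
  have hbnn : ∀ l : ℕ, 0 ≤ b l := by
    intro l
    rw [hb]
    have h1 : (p - r) ^ l ≤ 1 := pow_le_one₀ hq0.le hq1.le
    have : 0 ≤ r - r * (p - r) ^ l := by nlinarith
    positivity
  -- denominator positivity
  have hD : ∀ h : ℕ, 1 ≤ h → ∀ ρ : ℝ, ρ ∈ Set.Icc (0:ℝ) 1 →
      0 < ρ * b h + (1 - ρ) * b (h + 1) + (1 - p) * ((h : ℝ) + 1 - ρ) := by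
    intro h hh ρ hρ
    obtain ⟨hρ0, hρ1⟩ := hρ
    have h1 : (1:ℝ) ≤ (h:ℝ) := by exact_mod_cast hh
    have t1 : 0 ≤ ρ * b h := mul_nonneg hρ0 (hbnn h)
    have t2 : 0 ≤ (1 - ρ) * b (h + 1) := mul_nonneg (by linarith) (hbnn (h+1))
    have t3 : 0 < (1 - p) * ((h : ℝ) + 1 - ρ) := by
      apply mul_pos ha; linarith
    linarith
  -- identity: b h - b (h+1) = - r * (p-r)^h
  have hdiff : ∀ h : ℕ, b h = b (h + 1) - r * (p - r) ^ h := by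
    intro h
    rw [hb, hb]
    rw [pow_succ]
    field_simp
    ring
  -- key positivity for strict monotonicity
  have hK : ∀ h : ℕ, 1 ≤ h → 0 < (1 - p) + b (h + 1) - (h : ℝ) * (r * (p - r) ^ h) := by
    intro h hh
    have haux := aux_pow (p - r) hq0 h hh
    have he : b (h + 1) * (1 + r - p) = r - r * (p - r) ^ (h + 1) := by
      rw [hb]; field_simp
    have hpn : (0:ℝ) ≤ (p - r) ^ h := pow_nonneg hq0.le h
    have hmul : 0 < ((1 - p) + b (h + 1) - (h : ℝ) * (r * (p - r) ^ h)) * (1 + r - p) := by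
      have hr_aux : r * ((p - r) ^ h * ((p - r) + (h : ℝ) * (1 - (p - r)))) ≤ r * (p - r) :=
        mul_le_mul_of_nonneg_left haux hr.le
      nlinarith [hr_aux, he, pow_succ (p - r) h]
    nlinarith [hmul, hd]
  refine ⟨?_, ?_, ?_, ?_⟩
  · -- (i)
    intro h hh
    rw [hA, hA]
    push_cast
    ring_nf
  · -- (ii)
    intro h hh
    intro x hx y hy hxy
    have h1 : (1:ℝ) ≤ (h:ℝ) := by exact_mod_cast hh
    have hDx := hD h hh x hx
    have hDy := hD h hh y hy
    rw [hA, hA]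
    have key : (1 - p) * ((h:ℝ) - x) * (y * b h + (1 - y) * b (h + 1) + (1 - p) * ((h : ℝ) + 1 - y))
        - (1 - p) * ((h:ℝ) - y) * (x * b h + (1 - x) * b (h + 1) + (1 - p) * ((h : ℝ) + 1 - x))
        = (1 - p) * (y - x) * ((1 - p) + b (h + 1) - (h : ℝ) * (r * (p - r) ^ h)) := by
      rw [hdiff h]; ring
    have hKp := hK h hh
    have : (1 - p) * ((h:ℝ) - y) / (y * b h + (1 - y) * b (h + 1) + (1 - p) * ((h : ℝ) + 1 - y))
        < (1 - p) * ((h:ℝ) - x) / (x * b h + (1 - x) * b (h + 1) + (1 - p) * ((h : ℝ) + 1 - x)) := by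
      rw [div_lt_div_iff₀ hDy hDx]
      nlinarith [mul_pos (mul_pos ha (sub_pos.mpr hxy)) hKp]
    linarith
  · -- (iii)
    rw [hA]
    norm_num
  · -- (iv)
    intro h hh ρ hρ
    obtain ⟨hρ0, hρ1⟩ := hρ
    have h1 : (1:ℝ) ≤ (h:ℝ) := by exact_mod_cast hh
    have hDρ := hD h hh ρ ⟨hρ0, hρ1⟩
    rw [hA]
    constructor
    · have hN : (1 - p) * ((h:ℝ) - ρ) < ρ * b h + (1 - ρ) * b (h + 1) + (1 - p) * ((h : ℝ) + 1 - ρ) := by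
        have t1 : 0 ≤ ρ * b h := mul_nonneg hρ0 (hbnn h)
        have t2 : 0 ≤ (1 - ρ) * b (h + 1) := mul_nonneg (by linarith) (hbnn (h+1))
        nlinarith
      have := (div_lt_one hDρ).mpr hN
      linarith
    · have hN0 : 0 ≤ (1 - p) * ((h:ℝ) - ρ) := mul_nonneg ha.le (by linarith)
      have := div_nonneg hN0 hDρ.le
      linarith
end

section
/- Fix real parameters p, r with 0 < r < p < 1, define b_{0,h} = (r − r(p−r)^h)/(1+r−p) for integers h ≥ 1, and define the activation fraction A(h,ρ) = 1 − (1−p)(h−ρ) / (ρ·b_{0,h} + (1−ρ)·b_{0,h+1} + (1−p)(h+1−ρ)) for integers h ≥ 1 and ρ ∈ [0,1]. Then for every α ∈ (0,1] there exists a unique pair (h,ρ) with h an integer ≥ 1 and ρ ∈ (0,1] such that A(h,ρ) = α. -/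
/-- Geometric auxiliary inequality: `(n+1)(1-q)q^n ≤ 1 - q^(n+1)` for `0 ≤ q ≤ 1`. -/
lemma stmt_13_geom_aux (q : ℝ) (h0 : 0 ≤ q) (h1 : q ≤ 1) :
    ∀ n : ℕ, ((n : ℝ) + 1) * (1 - q) * q ^ n ≤ 1 - q ^ (n + 1) := by
  intro n
  induction n with
  | zero => simp
  | succ m ih =>
    have hq0 : 0 ≤ q ^ m := pow_nonneg h0 m
    have hle : q ^ (m + 1) ≤ q ^ m := pow_le_pow_of_le_one h0 h1 (by omega)
    have hps : q ^ (m + 1) = q ^ m * q := pow_succ q m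
    have hps2 : q ^ (m + 2) = q ^ m * q * q := by rw [pow_succ, pow_succ]
    have hmn : (0 : ℝ) ≤ (m : ℝ) + 1 := by positivity
    push_cast
    nlinarith [mul_nonneg (mul_nonneg hmn (sub_nonneg.2 h1)) (sub_nonneg.2 hle)]

/-- Every activation fraction `α ∈ (0,1]` is achieved by a unique randomized
threshold policy: there is a unique pair `(h,ρ)` with `h ≥ 1` and `ρ ∈ (0,1]`
such that `A(h,ρ) = α`. -/
theorem stmt_13 (p r : ℝ) (hr : 0 < r) (hrp : r < p) (hp : p < 1)
    (b : ℕ → ℝ) (hb : ∀ l, b l = (r - r * (p - r) ^ l) / (1 + r - p))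
    (A : ℕ → ℝ → ℝ)
    (hA : ∀ (h : ℕ) (ρ : ℝ), A h ρ =
      1 - (1 - p) * ((h : ℝ) - ρ) /
        (ρ * b h + (1 - ρ) * b (h + 1) + (1 - p) * ((h : ℝ) + 1 - ρ))) :
    ∀ α ∈ Set.Ioc (0 : ℝ) 1,
      ∃! hρ : ℕ × ℝ, 1 ≤ hρ.1 ∧ hρ.2 ∈ Set.Ioc (0 : ℝ) 1 ∧ A hρ.1 hρ.2 = α := by
  classical
  set q : ℝ := p - r with hqdef
  have hq0 : 0 < q := by simp only [hqdef]; linarith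
  have hq1 : q < 1 := by simp only [hqdef]; linarith
  have h1q : (0:ℝ) < 1 + r - p := by linarith
  have h1p : (0:ℝ) < 1 - p := by linarith
  -- basic facts about b
  have hbnn : ∀ m : ℕ, 0 ≤ b m := by
    intro m
    rw [hb]
    have h2 : q ^ m ≤ 1 := pow_le_one₀ hq0.le hq1.le
    have h3 : r * q ^ m ≤ r := by nlinarith
    apply div_nonneg (by linarith) h1q.le
  have hbub : ∀ m : ℕ, b m ≤ r / (1 + r - p) := by
    intro m
    rw [hb, div_le_div_iff_of_pos_right h1q]
    nlinarith [mul_nonneg hr.le (pow_nonneg hq0.le m)]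
  have hdiff : ∀ m : ℕ, b (m + 1) - b m = r * q ^ m := by
    intro m
    rw [hb, hb]
    field_simp
    ring
  have hblb : ∀ m : ℕ, (m : ℝ) * (r * q ^ m) ≤ b (m + 1) := by
    intro m
    rw [hb]
    have hq' : (1:ℝ) + r - p = 1 - q := by rw [hqdef]; ring
    rw [hq', le_div_iff₀ (by linarith : (0:ℝ) < 1 - q)]
    have hg := stmt_13_geom_aux q hq0.le hq1.le m
    have hqm : 0 ≤ q ^ m := pow_nonneg hq0.le m
    have h1 : r * (((m:ℝ) + 1) * (1 - q) * q ^ m) ≤ r * (1 - q ^ (m+1)) :=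
      mul_le_mul_of_nonneg_left hg hr.le
    nlinarith [mul_nonneg (mul_nonneg hr.le hqm) (sub_nonneg.2 hq1.le)]
  -- positivity of the denominator
  have hD : ∀ (h : ℕ), 1 ≤ h → ∀ ρ ∈ Set.Icc (0:ℝ) 1,
      1 - p ≤ ρ * b h + (1 - ρ) * b (h + 1) + (1 - p) * ((h : ℝ) + 1 - ρ) := by
    intro h hh ρ hρ
    obtain ⟨hρ0, hρ1⟩ := hρ
    have hh1 : (1:ℝ) ≤ (h:ℝ) := by exact_mod_cast hh
    have h1 : 0 ≤ ρ * b h := mul_nonneg hρ0 (hbnn h)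
    have h2 : 0 ≤ (1 - ρ) * b (h + 1) := mul_nonneg (by linarith) (hbnn (h+1))
    nlinarith
  -- strict monotonicity in ρ
  have hmono : ∀ (h : ℕ), 1 ≤ h → ∀ ρ1 ρ2 : ℝ, ρ1 ∈ Set.Icc (0:ℝ) 1 →
      ρ2 ∈ Set.Icc (0:ℝ) 1 → ρ1 < ρ2 → A h ρ1 < A h ρ2 := by
    intro h hh ρ1 ρ2 h1m h2m hlt
    rw [hA, hA]
    set D1 := ρ1 * b h + (1 - ρ1) * b (h + 1) + (1 - p) * ((h : ℝ) + 1 - ρ1) with hD1def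
    set D2 := ρ2 * b h + (1 - ρ2) * b (h + 1) + (1 - p) * ((h : ℝ) + 1 - ρ2) with hD2def
    have hD1 : 0 < D1 := lt_of_lt_of_le h1p (hD h hh ρ1 h1m)
    have hD2 : 0 < D2 := lt_of_lt_of_le h1p (hD h hh ρ2 h2m)
    rw [sub_lt_sub_iff_left, div_lt_div_iff₀ hD2 hD1]
    have hkey : 0 < b (h + 1) + (1 - p) - (h : ℝ) * (b (h + 1) - b h) := by
      have := hblb h
      rw [hdiff h]
      linarith
    have hid : (1 - p) * ((h : ℝ) - ρ1) * D2 - (1 - p) * ((h : ℝ) - ρ2) * D1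
        = (1 - p) * (ρ2 - ρ1) * (b (h + 1) + (1 - p) - (h : ℝ) * (b (h + 1) - b h)) := by
      rw [hD1def, hD2def]; ring
    nlinarith [mul_pos (mul_pos h1p (sub_pos.2 hlt)) hkey]
  -- tiling: A h 0 = A (h+1) 1
  have hstep : ∀ h : ℕ, A h 0 = A (h + 1) 1 := by
    intro h
    rw [hA, hA]
    push_cast
    ring
  have hA11 : A 1 1 = 1 := by
    rw [hA]; norm_num
  -- A h 0 gets below any positive α eventually
  have hsmall : ∀ α : ℝ, 0 < α → α ≤ 1 → ∃ h : ℕ, 1 ≤ h ∧ A h 0 < α := by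
    intro α hα hα1
    set C : ℝ := r / (1 + r - p) with hC
    have hC0 : 0 ≤ C := div_nonneg hr.le h1q.le
    obtain ⟨n0, hn0⟩ := exists_nat_gt (((1 - α) * (C + (1 - p))) / (α * (1 - p)))
    refine ⟨max n0 1, le_max_right _ _, ?_⟩
    set m := max n0 1 with hm
    have hmn0 : (n0 : ℝ) ≤ (m : ℝ) := by exact_mod_cast Nat.le_max_left n0 1
    have hm1 : (1:ℝ) ≤ (m:ℝ) := by exact_mod_cast Nat.le_max_right n0 1
    have hbig : ((1 - α) * (C + (1 - p))) < α * (1 - p) * m := by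
      have h2 : ((1 - α) * (C + (1 - p))) / (α * (1 - p)) < (m:ℝ) := lt_of_lt_of_le hn0 hmn0
      have h3 : 0 < α * (1 - p) := mul_pos hα h1p
      calc (1 - α) * (C + (1 - p))
          = (((1 - α) * (C + (1 - p))) / (α * (1 - p))) * (α * (1-p)) := by
            field_simp
        _ < (m:ℝ) * (α * (1-p)) := by
            apply mul_lt_mul_of_pos_right h2 h3
        _ = α * (1 - p) * m := by ring
    have hDm : 0 < (0:ℝ) * b m + (1 - 0) * b (m + 1) + (1 - p) * ((m : ℝ) + 1 - 0) :=
      lt_of_lt_of_le h1p (hD m (Nat.le_max_right n0 1) 0 (by norm_num))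
    have hd1 : (1 - α) * ((0:ℝ) * b m + (1 - 0) * b (m + 1) + (1 - p) * ((m:ℝ) + 1 - 0))
        < (1-p) * ((m:ℝ) - 0) := by
      have h4 := hbub (m+1)
      have h5 : (0:ℝ) ≤ 1 - α := by linarith
      nlinarith [mul_le_mul_of_nonneg_left h4 h5]
    rw [hA]
    have h6 : 1 - α < (1-p) * ((m:ℝ) - 0) /
        ((0:ℝ) * b m + (1 - 0) * b (m + 1) + (1 - p) * ((m:ℝ) + 1 - 0)) :=
      (lt_div_iff₀ hDm).2 hd1
    linarith
  -- main argument
  intro α hαmem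
  obtain ⟨hα0, hα1⟩ := hαmem
  obtain ⟨m0, hm01, hm0⟩ := hsmall α hα0 hα1
  have hex : ∃ n : ℕ, A (n + 1) 0 < α := by
    obtain ⟨k, rfl⟩ := Nat.exists_eq_add_of_le hm01
    exact ⟨k, by simpa [Nat.add_comm] using hm0⟩
  set n := Nat.find hex with hn
  have hfind : A (n + 1) 0 < α := Nat.find_spec hex
  have hupper : α ≤ A (n + 1) 1 := by
    rcases Nat.eq_zero_or_pos n with h0 | h0
    · rw [h0]; show α ≤ A 1 1; rw [hA11]; exact hα1
    · obtain ⟨m, hm⟩ : ∃ m, n = m + 1 := ⟨n - 1, by omega⟩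
      have h1 : ¬ A (m + 1) 0 < α := Nat.find_min hex (show m < n by omega)
      have h2 : α ≤ A (m + 1 + 1) 1 := by rw [← hstep]; linarith [not_lt.1 h1]
      rw [hm]; exact h2
  -- continuity and intermediate value theorem
  have hcont : ContinuousOn (fun ρ => A (n+1) ρ) (Set.Icc (0:ℝ) 1) := by
    have hfun : (fun ρ => A (n+1) ρ) = fun ρ =>
        1 - (1 - p) * (((n+1 : ℕ) : ℝ) - ρ) /
          (ρ * b (n+1) + (1 - ρ) * b (n+1+1) + (1 - p) * (((n+1:ℕ) : ℝ) + 1 - ρ)) :=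
      funext fun ρ => hA (n+1) ρ
    rw [hfun]
    apply ContinuousOn.sub continuousOn_const
    apply ContinuousOn.div (by fun_prop) (by fun_prop)
    intro ρ hρ
    have := hD (n+1) (by omega) ρ hρ
    exact ne_of_gt (lt_of_lt_of_le h1p this)
  have hsub := intermediate_value_Ioc (by norm_num : (0:ℝ) ≤ 1) hcont
  have hmem : α ∈ Set.Ioc (A (n+1) 0) (A (n+1) 1) := ⟨hfind, hupper⟩
  obtain ⟨ρ, hρmem, hρeq⟩ := hsub hmem
  replace hρeq : A (n+1) ρ = α := hρeq
  -- antitone chain in h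
  have hanti : ∀ (k m : ℕ), 1 ≤ k → A (k + m) 1 ≤ A k 1 := by
    intro k m hk
    induction m with
    | zero => exact le_rfl
    | succ j ih =>
      have h1 : A (k + j + 1) 1 = A (k + j) 0 := (hstep (k + j)).symm
      have h2 : A (k + j) 0 < A (k + j) 1 :=
        hmono (k + j) (by omega) 0 1 (by norm_num) (by norm_num) one_pos
      calc A (k + (j+1)) 1 = A (k + j) 0 := h1
        _ ≤ A k 1 := le_of_lt (lt_of_lt_of_le h2 ih)
  have hcross : ∀ (k k' : ℕ) (σ σ' : ℝ), 1 ≤ k → σ ∈ Set.Ioc (0:ℝ) 1 →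
      σ' ∈ Set.Ioc (0:ℝ) 1 → k < k' → A k' σ' < A k σ := by
    intro k k' σ σ' hk hσ hσ' hkk
    have h1 : A k' σ' ≤ A k' 1 := by
      rcases eq_or_lt_of_le hσ'.2 with h | h
      · rw [h]
      · exact le_of_lt (hmono k' (by omega) σ' 1 ⟨hσ'.1.le, hσ'.2⟩ (by norm_num) h)
    have h2 : A k' 1 ≤ A (k+1) 1 := by
      obtain ⟨m, hm⟩ : ∃ m, k' = (k+1) + m := ⟨k' - (k+1), by omega⟩
      rw [hm]; exact hanti (k+1) m (by omega)
    have h3 : A (k+1) 1 = A k 0 := (hstep k).symm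
    have h4 : A k 0 < A k σ :=
      hmono k hk 0 σ (by norm_num) ⟨hσ.1.le, hσ.2⟩ hσ.1
    linarith
  refine ⟨(n+1, ρ), ⟨by omega, hρmem, hρeq⟩, ?_⟩
  rintro ⟨k, σ⟩ ⟨hk1, hσmem, hσeq⟩
  have hkeq : k = n + 1 := by
    by_contra hne
    rcases lt_or_gt_of_ne hne with h | h
    · have := hcross k (n+1) σ ρ hk1 hσmem hρmem h
      rw [hσeq, hρeq] at this; exact lt_irrefl α this
    · have := hcross (n+1) k ρ σ (by omega) hρmem hσmem h
      rw [hσeq, hρeq] at this; exact lt_irrefl α this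
  subst hkeq
  have hσρ : σ = ρ := by
    by_contra hne
    rcases lt_or_gt_of_ne hne with h | h
    · have := hmono (n+1) (by omega) σ ρ ⟨hσmem.1.le, hσmem.2⟩ ⟨hρmem.1.le, hρmem.2⟩ h
      rw [hσeq, hρeq] at this; exact lt_irrefl α this
    · have := hmono (n+1) (by omega) ρ σ ⟨hρmem.1.le, hρmem.2⟩ ⟨hσmem.1.le, hσmem.2⟩ h
      rw [hσeq, hρeq] at this; exact lt_irrefl α this
  rw [hσρ]
end

section
/- Fix real parameters p, r with 0 < r < p < 1, an integer h ≥ 2, and set b = b_{0,h} = (r − r(p−r)^h)/(1+r−p). Define the polynomial χ₂(λ) = ((1−p) + (1−b)λ) · Σ_{j=0}^{h−3} (1+λ)^j + (1+λ)^{h−2} · ( ((1−p)+λ)(2+λ) + b ), where the sum is empty when h = 2. Then χ₂(0) = h(1−p) + b ≠ 0, and every complex root λ of χ₂ satisfies −2 < Re(λ) < 0. -/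
/-- For the reduced characteristic polynomial `χ₂` of the class-2 block (with
threshold `h ≥ 2` and threshold belief `b = b_{0,h}`): `χ₂(0) = h(1-p) + b ≠ 0`,
and every complex root of `χ₂` has real part in `(-2, 0)`. -/
theorem stmt_15 (p r : ℝ) (hr : 0 < r) (hrp : r < p) (hp : p < 1)
    (h : ℕ) (hh : 2 ≤ h)
    (b : ℝ) (hb : b = (r - r * (p - r) ^ h) / (1 + r - p))
    (χ₂ : ℂ → ℂ)
    (hχ₂ : ∀ l : ℂ, χ₂ l =
      ((1 - (p : ℂ)) + (1 - (b : ℂ)) * l) * (∑ j ∈ Finset.range (h - 2), (1 + l) ^ j) +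
        (1 + l) ^ (h - 2) * (((1 - (p : ℂ)) + l) * (2 + l) + (b : ℂ))) :
    (χ₂ 0 = (h : ℂ) * (1 - (p : ℂ)) + (b : ℂ) ∧ χ₂ 0 ≠ 0) ∧
    (∀ l : ℂ, χ₂ l = 0 → -2 < l.re ∧ l.re < 0) := by
  have hq0 : 0 < p - r := by linarith
  have hq1 : p - r < 1 := by linarith
  have hqh : (p - r) ^ h < 1 := pow_lt_one₀ hq0.le hq1 (by omega)
  have hqhpos : 0 < (p - r) ^ h := pow_pos hq0 h
  have hden : 0 < 1 + r - p := by linarith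
  have hb0 : 0 < b := by
    rw [hb]; apply div_pos _ hden; nlinarith
  have hb1 : b < 1 := by
    rw [hb, div_lt_one hden]; nlinarith
  -- value at 0
  have hval : χ₂ 0 = (h : ℂ) * (1 - (p : ℂ)) + (b : ℂ) := by
    rw [hχ₂ 0]
    simp only [add_zero, mul_zero, one_pow, Finset.sum_const, Finset.card_range,
      nsmul_eq_mul, mul_one, one_mul]
    push_cast [Nat.cast_sub hh]
    ring
  have hposR : (0:ℝ) < (h : ℝ) * (1 - p) + b := by
    have h0 : (0:ℝ) ≤ (h : ℝ) := Nat.cast_nonneg h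
    nlinarith
  have hne : χ₂ 0 ≠ 0 := by
    rw [hval]
    intro hc
    have : ((h : ℝ) * (1 - p) + b : ℝ) = 0 := by exact_mod_cast hc
    linarith
  refine ⟨⟨hval, hne⟩, ?_⟩
  -- key identity
  have key : ∀ l : ℂ, l * χ₂ l
      = (1 + l) ^ h * (l + 1 - (p : ℂ)) - ((1 - (b : ℂ)) * l + (1 - (p : ℂ))) := by
    intro l
    have hg : (∑ j ∈ Finset.range (h - 2), (1 + l) ^ j) * ((1 + l) - 1)
        = (1 + l) ^ (h - 2) - 1 := geom_sum_mul _ _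
    have hpow : (1 + l) ^ h = (1 + l) ^ (h - 2) * ((1 + l) * (1 + l)) := by
      conv_lhs => rw [show h = h - 2 + 2 from by omega]
      rw [pow_add]; ring
    rw [hχ₂ l, hpow]
    linear_combination ((1 : ℂ) - (p : ℂ) + (1 - (b : ℂ)) * l) * hg
  intro l hl
  have hlne : l ≠ 0 := by rintro rfl; exact hne hl
  have heq : (1 + l) ^ h * (l + 1 - (p : ℂ)) = (1 - (b : ℂ)) * l + (1 - (p : ℂ)) := by
    have hk := key l
    rw [hl, mul_zero] at hk
    linear_combination -hk
  set R := ‖(l + 1 - (p : ℂ))‖ with hR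
  -- shared contradiction
  have contra : 1 ≤ ‖(1 + l)‖ → 1 - p < R → False := by
    intro h1 h2
    have e1 : ‖((1 + l) ^ h * (l + 1 - (p : ℂ)))‖
        = (‖(1 + l)‖) ^ h * R := by
      rw [norm_mul, norm_pow]
    have habs1 : ‖((1 : ℂ) - (b : ℂ))‖ = 1 - b := by
      rw [show (1:ℂ) - (b:ℂ) = ((1 - b : ℝ) : ℂ) by push_cast; ring,
        Complex.norm_real, Real.norm_eq_abs, abs_of_nonneg (by linarith)]
    have habs2 : ‖((b : ℂ) * (1 - (p : ℂ)))‖ = b * (1 - p) := by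
      rw [show (b:ℂ) * (1 - (p:ℂ)) = ((b * (1 - p) : ℝ) : ℂ) by push_cast; ring,
        Complex.norm_real, Real.norm_eq_abs, abs_of_nonneg (by nlinarith)]
    have e2 : ‖((1 - (b : ℂ)) * l + (1 - (p : ℂ)))‖
        ≤ (1 - b) * R + b * (1 - p) := by
      have hsplit : (1 - (b : ℂ)) * l + (1 - (p : ℂ))
          = (1 - (b : ℂ)) * (l + 1 - (p : ℂ)) + (b : ℂ) * (1 - (p : ℂ)) := by
        push_cast; ring
      rw [hsplit]
      calc ‖_‖ ≤ ‖((1 - (b : ℂ)) * (l + 1 - (p : ℂ)))‖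
            + ‖((b : ℂ) * (1 - (p : ℂ)))‖ := norm_add_le _ _
        _ = (1 - b) * R + b * (1 - p) := by rw [norm_mul, habs1, habs2]
    have hx : 1 ≤ (‖(1 + l)‖) ^ h := one_le_pow₀ h1
    have hRnn : 0 ≤ R := norm_nonneg _
    have e3 : R ≤ (‖(1 + l)‖) ^ h * R := le_mul_of_one_le_left hRnn hx
    have e4 : ‖((1 + l) ^ h * (l + 1 - (p : ℂ)))‖
        = ‖((1 - (b : ℂ)) * l + (1 - (p : ℂ)))‖ := by rw [heq]
    nlinarith
  have hre1 : (1 + l).re = 1 + l.re := by simp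
  have hreP : (l + 1 - (p : ℂ)).re = l.re + 1 - p := by simp
  constructor
  · by_contra hc
    push_neg at hc
    have hle : l.re ≤ -2 := by linarith
    apply contra
    · have h' := Complex.abs_re_le_norm (1 + l)
      rw [hre1] at h'
      have : (1:ℝ) ≤ |1 + l.re| := le_abs.mpr (Or.inr (by linarith))
      linarith
    · have h' := Complex.abs_re_le_norm (l + 1 - (p : ℂ))
      rw [hreP] at h'
      have : (1 + p : ℝ) ≤ |l.re + 1 - p| := le_abs.mpr (Or.inr (by linarith))
      have hp0 : 0 < p := lt_trans hr hrp
      linarith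
  · by_contra hc
    push_neg at hc
    have hge : 0 ≤ l.re := hc
    apply contra
    · have h' := Complex.abs_re_le_norm (1 + l)
      rw [hre1] at h'
      have : (1:ℝ) ≤ |1 + l.re| := le_abs.mpr (Or.inl (by linarith))
      linarith
    · have hsq : (1 - p) ^ 2 < R ^ 2 := by
        rw [hR, Complex.sq_norm, Complex.normSq_apply, hreP,
          show (l + 1 - (p : ℂ)).im = l.im by simp]
        have hns : 0 < l.re ^ 2 + l.im ^ 2 := by
          have := Complex.normSq_pos.mpr hlne
          rw [Complex.normSq_apply] at this
          nlinarith
        nlinarith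
      have hRnn : 0 ≤ R := norm_nonneg _
      nlinarith
end

section
/- Let b and p be real numbers with 0 < b < p < 1. Then for every complex number λ with |1+λ| ≥ 1 and |Re(1+λ)| < 1, the strict inequality |(1−p) + λ| > |(1−p) + (1−b)λ| holds. -/
/-- Key modulus inequality: for `0 < b < p < 1` and every complex `λ` with
`|1+λ| ≥ 1` and `|Re(1+λ)| < 1`, one has `|(1-p) + (1-b)λ| < |(1-p) + λ|`. -/
theorem stmt_16 (b p : ℝ) (hb : 0 < b) (hbp : b < p) (hp : p < 1) :
    ∀ l : ℂ, 1 ≤ ‖1 + l‖ → |(1 + l).re| < 1 →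
      ‖(1 - (p : ℂ)) + (1 - (b : ℂ)) * l‖ <
        ‖(1 - (p : ℂ)) + l‖ := by
  intro l h1 h2
  set x := l.re
  set y := l.im
  have hre : (1 + l).re = 1 + x := by simp [x]
  have h2' : |1 + x| < 1 := by rwa [hre] at h2
  have h1' : (1 : ℝ) ≤ (1 + x) ^ 2 + y ^ 2 := by
    have := Complex.sq_norm (1 + l)
    have habs : 1 ≤ ‖1 + l‖ ^ 2 := by nlinarith [norm_nonneg (1 + l)]
    rw [this] at habs
    simpa [Complex.normSq_apply, x, y, sq] using habs
  have hx : x < 0 := by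
    have := abs_lt.mp h2'
    linarith [this.2]
  rw [Complex.norm_def, Complex.norm_def]
  apply Real.sqrt_lt_sqrt (Complex.normSq_nonneg _)
  simp only [Complex.normSq_apply, Complex.add_re, Complex.add_im, Complex.sub_re,
    Complex.sub_im, Complex.mul_re, Complex.mul_im, Complex.one_re, Complex.one_im,
    Complex.ofReal_re, Complex.ofReal_im]
  have hxlt : 1 + x < 1 := (abs_lt.mp h2').2
  have hc : (0:ℝ) < 1 + p - b := by linarith
  nlinarith [mul_nonneg (mul_nonneg hb.le (by linarith : (0:ℝ) ≤ 2 - b))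
      (by linarith : (0:ℝ) ≤ (1 + x) ^ 2 + y ^ 2 - 1),
    mul_pos (mul_pos hb hc) (by linarith : (0:ℝ) < -x)]
end

section
/- Fix real parameters p, r with 0 < r < p < 1, an integer h ≥ 2, and set b = b_{0,h} = (r − r(p−r)^h)/(1+r−p). Define the polynomial χ₂(λ) = ((1−p) + (1−b)λ) · Σ_{j=0}^{h−3} (1+λ)^j + (1+λ)^{h−2} · ( ((1−p)+λ)(2+λ) + b ), where the sum is empty when h = 2. Then every complex root λ of χ₂ satisfies |1+λ| < 1. -/
set_option maxHeartbeats 800000 in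
private lemma stmt_17_aux (b p t x y : ℝ) (hb0 : 0 < b) (hbp : b < p) (hp : p < 1)
    (ht2 : x ^ 2 + y ^ 2 = t ^ 2) (hx : x ≤ t) (ht : 1 ≤ t)
    (hcase : x < 1 ∨ 1 < t) :
    ((1 - b) * x - (p - b)) ^ 2 + ((1 - b) * y) ^ 2 < (x - p) ^ 2 + y ^ 2 := by
  have hid : (x - p) ^ 2 + y ^ 2 - (((1 - b) * x - (p - b)) ^ 2 + ((1 - b) * y) ^ 2)
      = b * ((2 - b) * t ^ 2 - 2 * (1 + p - b) * x + (2 * p - b)) := by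
    linear_combination (b * (2 - b)) * ht2
  rcases hcase with hx1 | htgt
  · rcases eq_or_lt_of_le ht with hteq | htgt
    · have ht1 : t = 1 := hteq.symm
      have hkey : 0 < 2 * b * ((1 + p - b) * (1 - x)) := by
        apply mul_pos (by linarith)
        apply mul_pos (by linarith) (by linarith)
      have h3 : b * ((2 - b) * t ^ 2 - 2 * (1 + p - b) * x + (2 * p - b))
          = 2 * b * ((1 + p - b) * (1 - x)) := by rw [ht1]; ring
      linarith [hid, h3, hkey]
    · have e0 : (2 - b) * 1 ≤ (2 - b) * t :=
        mul_le_mul_of_nonneg_left ht (by linarith)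
      have h5 : 0 < b * ((t - 1) * ((2 - b) * t - (2 * p - b))) := by
        apply mul_pos (by linarith)
        apply mul_pos (by linarith) (by linarith)
      have h6 : 0 ≤ b * (2 * (1 + p - b) * (t - x)) := by
        apply mul_nonneg (by linarith)
        apply mul_nonneg (by linarith) (by linarith)
      have h4 : b * ((2 - b) * t ^ 2 - 2 * (1 + p - b) * x + (2 * p - b))
          = b * ((t - 1) * ((2 - b) * t - (2 * p - b))) + b * (2 * (1 + p - b) * (t - x)) := by
        ring
      linarith [hid, h4, h5, h6]
  · have e0 : (2 - b) * 1 ≤ (2 - b) * t :=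
      mul_le_mul_of_nonneg_left ht (by linarith)
    have h5 : 0 < b * ((t - 1) * ((2 - b) * t - (2 * p - b))) := by
      apply mul_pos (by linarith)
      apply mul_pos (by linarith) (by linarith)
    have h6 : 0 ≤ b * (2 * (1 + p - b) * (t - x)) := by
      apply mul_nonneg (by linarith)
      apply mul_nonneg (by linarith) (by linarith)
    have h4 : b * ((2 - b) * t ^ 2 - 2 * (1 + p - b) * x + (2 * p - b))
        = b * ((t - 1) * ((2 - b) * t - (2 * p - b))) + b * (2 * (1 + p - b) * (t - x)) := by
      ring
    linarith [hid, h4, h5, h6]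

/-- Stability of the class-2 block of the linearized fluid dynamics of Whittle's
Index Policy: every complex root `λ` of the reduced characteristic polynomial `χ₂`
satisfies `|1+λ| < 1`. -/
theorem stmt_17 (p r : ℝ) (hr : 0 < r) (hrp : r < p) (hp : p < 1)
    (h : ℕ) (hh : 2 ≤ h)
    (b : ℝ) (hb : b = (r - r * (p - r) ^ h) / (1 + r - p))
    (χ₂ : ℂ → ℂ)
    (hχ₂ : ∀ l : ℂ, χ₂ l =
      ((1 - (p : ℂ)) + (1 - (b : ℂ)) * l) * (∑ j ∈ Finset.range (h - 2), (1 + l) ^ j) +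
        (1 + l) ^ (h - 2) * (((1 - (p : ℂ)) + l) * (2 + l) + (b : ℂ))) :
    ∀ l : ℂ, χ₂ l = 0 → ‖1 + l‖ < 1 := by
  have hden : 0 < 1 + r - p := by linarith
  have hpr : 0 < p - r := by linarith
  have hpow : (p - r) ^ h < 1 := pow_lt_one₀ hpr.le (by linarith) (by omega)
  have hpow0 : 0 < (p - r) ^ h := pow_pos hpr h
  have hb0 : 0 < b := by
    rw [hb]; apply div_pos; nlinarith; exact hden
  have hbp : b < p := by
    rw [hb, div_lt_iff₀ hden]; nlinarith
  intro l hroot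
  by_contra hcon
  push_neg at hcon
  obtain ⟨m, rfl⟩ : ∃ m, h = m + 2 := ⟨h - 2, by omega⟩
  set μ : ℂ := 1 + l with hμ
  have hμ1 : μ ≠ 1 := by
    intro h1
    have hl0 : l = 0 := by
      have : (1 : ℂ) + l = 1 := by rw [← hμ, h1]
      linear_combination this
    rw [hl0, hχ₂ 0] at hroot
    simp at hroot
    have hre : ((1 - p) * (m + 2 - 2 : ℕ) + ((1 - p) * 2 + b) : ℝ) = 0 := by
      exact_mod_cast hroot
    have hm : (0:ℝ) ≤ ((m + 2 - 2 : ℕ) : ℝ) := Nat.cast_nonneg _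
    nlinarith
  have hS : (μ - 1) * (∑ j ∈ Finset.range m, μ ^ j) = μ ^ m - 1 := by
    rw [mul_comm]; exact geom_sum_mul μ m
  have hl : l = μ - 1 := by rw [hμ]; ring
  have key : μ ^ (m + 2) * (μ - (p : ℂ)) - ((1 - (b : ℂ)) * μ - ((p : ℂ) - b)) =
      (μ - 1) * χ₂ l := by
    rw [hχ₂ l]
    have h2 : m + 2 - 2 = m := by omega
    rw [h2, ← hμ, hl]
    linear_combination (-(((1 : ℂ) - p) + (1 - b) * (μ - 1))) * hS
  rw [hroot, mul_zero] at key
  have heq : μ ^ (m + 2) * (μ - (p : ℂ)) = (1 - (b : ℂ)) * μ - ((p : ℂ) - b) :=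
    sub_eq_zero.mp key
  have habs : ‖μ‖ ^ (m + 2) * ‖μ - (p : ℂ)‖ =
      ‖(1 - (b : ℂ)) * μ - ((p : ℂ) - b)‖ := by
    rw [← norm_pow, ← norm_mul, heq]
  set x := μ.re with hxdef
  set y := μ.im with hydef
  set t := ‖μ‖ with htdef
  have ht : 1 ≤ t := hcon
  have ht2 : x ^ 2 + y ^ 2 = t ^ 2 := by
    rw [htdef, Complex.sq_norm, Complex.normSq_apply]; ring
  have hx : x ≤ t := Complex.re_le_norm μ
  set A := ‖μ - (p : ℂ)‖ with hAdef
  set B := ‖(1 - (b : ℂ)) * μ - ((p : ℂ) - b)‖ with hBdef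
  have hA2 : A ^ 2 = (x - p) ^ 2 + y ^ 2 := by
    rw [hAdef, Complex.sq_norm, Complex.normSq_apply]
    simp [Complex.sub_re, Complex.sub_im, Complex.ofReal_re, Complex.ofReal_im]
    ring
  have hB2 : B ^ 2 = ((1 - b) * x - (p - b)) ^ 2 + ((1 - b) * y) ^ 2 := by
    rw [hBdef, Complex.sq_norm, Complex.normSq_apply]
    simp [Complex.sub_re, Complex.sub_im, Complex.mul_re, Complex.mul_im,
      Complex.ofReal_re, Complex.ofReal_im, Complex.one_re, Complex.one_im]
    ring
  have hD : B ^ 2 < A ^ 2 := by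
    rw [hA2, hB2]
    apply stmt_17_aux b p t x y hb0 hbp hp ht2 hx ht
    rcases eq_or_lt_of_le ht with hteq | htgt
    · left
      rcases lt_or_eq_of_le hx with h' | h'
      · linarith [h', hteq]
      · exfalso
        have hxx : x = 1 := by rw [h', ← hteq]
        have hy0 : y = 0 := by nlinarith
        apply hμ1
        apply Complex.ext
        · simpa [Complex.one_re] using hxx
        · simpa [Complex.one_im] using hy0
    · right; exact htgt
  have hBA : B < A := lt_of_pow_lt_pow_left₀ 2 (norm_nonneg _) hD
  have hA0 : 0 < A := lt_of_le_of_lt (norm_nonneg _) hBA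
  have hpow1 : 1 ≤ t ^ (m + 2) := one_le_pow₀ ht
  have hge : 1 * A ≤ t ^ (m + 2) * A := mul_le_mul_of_nonneg_right hpow1 hA0.le
  rw [one_mul] at hge
  linarith
end

section
/- Fix real parameters p, r with 0 < r < p < 1 and an integer h ≥ 1, and set b_{0,l} = (r − r(p−r)^l)/(1+r−p) for integers l ≥ 1. Define the polynomial χ₁(λ) = (λ + (1−p) + b_{0,h})·(1+λ)^{h−1} − (b_{0,h+1} − b_{0,h}) · Σ_{j=0}^{h−2} (1+λ)^j, where the sum is empty (equal to 0) when h = 1. Then every complex root λ of χ₁ satisfies |1+λ| < 1. -/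
/-- Stability of the class-1 block of the linearized fluid dynamics of Whittle's
Index Policy: every complex root `λ` of the reduced characteristic polynomial `χ₁`
satisfies `|1+λ| < 1`. -/
theorem stmt_18 (p r : ℝ) (hr : 0 < r) (hrp : r < p) (hp : p < 1)
    (h : ℕ) (hh : 1 ≤ h)
    (b : ℕ → ℝ) (hb : ∀ l, b l = (r - r * (p - r) ^ l) / (1 + r - p))
    (χ₁ : ℂ → ℂ)
    (hχ₁ : ∀ l : ℂ, χ₁ l =
      (l + (1 - (p : ℂ)) + (b h : ℂ)) * (1 + l) ^ (h - 1) -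
        ((b (h + 1) : ℂ) - (b h : ℂ)) * (∑ j ∈ Finset.range (h - 1), (1 + l) ^ j)) :
    ∀ l : ℂ, χ₁ l = 0 → ‖1 + l‖ < 1 := by
  intro l hl
  by_contra hge
  push_neg at hge
  obtain ⟨m, rfl⟩ : ∃ m, h = m + 1 := ⟨h - 1, (Nat.succ_pred_eq_of_pos hh).symm⟩
  set q : ℝ := p - r with hqdef
  have hq0 : 0 < q := by simp only [hqdef]; linarith
  have hq1 : q < 1 := by simp only [hqdef]; linarith
  have hden : (0:ℝ) < 1 + r - p := by linarith
  have h1q : (1:ℝ) + r - p = 1 - q := by simp only [hqdef]; ring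
  -- value of the increment c
  have hc : b (m + 1 + 1) - b (m + 1) = r * q ^ (m + 1) := by
    rw [hb, hb, div_sub_div_same, div_eq_iff hden.ne', h1q]
    ring
  -- b as a geometric sum
  have hbh : b (m + 1) = r * ∑ j ∈ Finset.range (m + 1), q ^ j := by
    have hgs : (∑ j ∈ Finset.range (m + 1), q ^ j) * (q - 1) = q ^ (m + 1) - 1 :=
      geom_sum_mul q (m + 1)
    rw [hb, h1q, div_eq_iff (by linarith : (1:ℝ) - q ≠ 0)]
    linear_combination r * hgs
  have hsum_ge : ((m:ℝ) + 1) * q ^ m ≤ ∑ j ∈ Finset.range (m + 1), q ^ j := by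
    calc ((m:ℝ) + 1) * q ^ m = ∑ _j ∈ Finset.range (m + 1), q ^ m := by
          rw [Finset.sum_const, Finset.card_range, nsmul_eq_mul]; push_cast; ring
      _ ≤ ∑ j ∈ Finset.range (m + 1), q ^ j :=
          Finset.sum_le_sum fun j hj =>
            pow_le_pow_of_le_one hq0.le hq1.le
              (Nat.le_of_lt_succ (Finset.mem_range.mp hj))
  have hb_ge : r * (((m:ℝ) + 1) * q ^ m) ≤ b (m + 1) := by
    rw [hbh]; exact mul_le_mul_of_nonneg_left hsum_ge hr.le
  have hqm : 0 < q ^ m := pow_pos hq0 m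
  -- the key inequality
  have key : (m:ℝ) * (r * q ^ (m + 1)) < 1 - p + b (m + 1) := by
    have ha : 0 ≤ (m:ℝ) * (r * q ^ m) :=
      mul_nonneg (Nat.cast_nonneg m) (mul_nonneg hr.le hqm.le)
    have h1 : (m:ℝ) * (r * q ^ (m + 1)) ≤ (m:ℝ) * (r * q ^ m) := by
      rw [pow_succ, show (m:ℝ) * (r * (q ^ m * q)) = ((m:ℝ) * (r * q ^ m)) * q by ring]
      exact mul_le_of_le_one_right ha hq1.le
    have h2 : r * (((m:ℝ) + 1) * q ^ m) = (m:ℝ) * (r * q ^ m) + r * q ^ m := by ring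
    have h3 : 0 < r * q ^ m := mul_pos hr hqm
    linarith [hb_ge]
  -- b ≤ p
  have hbp : b (m + 1) ≤ p := by
    rw [hb, div_le_iff₀ hden]
    have h1 : 0 ≤ r * q ^ (m + 1) := mul_nonneg hr.le (pow_nonneg hq0.le _)
    nlinarith [mul_nonneg (by linarith : (0:ℝ) ≤ p - r) (by linarith : (0:ℝ) ≤ 1 - p)]
  have hb0 : 0 ≤ b (m + 1) := by
    rw [hbh]
    exact mul_nonneg hr.le (Finset.sum_nonneg fun j _ => pow_nonneg hq0.le j)
  -- complex part
  set z : ℂ := 1 + l with hz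
  have hA1 : (1:ℝ) ≤ ‖z‖ := hge
  have hApos : 0 < ‖z‖ ^ m := pow_pos (lt_of_lt_of_le one_pos hA1) m
  have heq : (l + (1 - (p : ℂ)) + (b (m + 1) : ℂ)) * z ^ m =
      ((b (m + 1 + 1) : ℂ) - (b (m + 1) : ℂ)) * ∑ j ∈ Finset.range m, z ^ j := by
    have t := hχ₁ l
    rw [hl] at t
    simp only [Nat.add_sub_cancel, ← hz] at t
    exact sub_eq_zero.mp t.symm
  have hfac : (l + (1 - (p : ℂ)) + (b (m + 1) : ℂ)) = z - ((p - b (m + 1) : ℝ) : ℂ) := by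
    push_cast; rw [hz]; ring
  -- lower bound on the LHS modulus
  have hlhs : (1 - p + b (m + 1)) * ‖z‖ ^ m ≤
      ‖(l + (1 - (p : ℂ)) + (b (m + 1) : ℂ)) * z ^ m‖ := by
    rw [hfac, norm_mul, norm_pow]
    apply mul_le_mul_of_nonneg_right _ (pow_nonneg (norm_nonneg z) m)
    have h1 : ‖z‖ - ‖((p - b (m + 1) : ℝ) : ℂ)‖ ≤
        ‖z - ((p - b (m + 1) : ℝ) : ℂ)‖ := norm_sub_norm_le _ _
    have h2 : ‖((p - b (m + 1) : ℝ) : ℂ)‖ = p - b (m + 1) := by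
      rw [Complex.norm_real, Real.norm_eq_abs, abs_of_nonneg (by linarith)]
    rw [h2] at h1
    linarith
  -- upper bound on the RHS modulus
  have hrhs : ‖((b (m + 1 + 1) : ℂ) - (b (m + 1) : ℂ)) *
      ∑ j ∈ Finset.range m, z ^ j‖ ≤
      (b (m + 1 + 1) - b (m + 1)) * ((m : ℝ) * ‖z‖ ^ m) := by
    rw [norm_mul]
    have hcc : ‖(b (m + 1 + 1) : ℂ) - (b (m + 1) : ℂ)‖ =
        b (m + 1 + 1) - b (m + 1) := by
      rw [← Complex.ofReal_sub, Complex.norm_real, Real.norm_eq_abs, abs_of_nonneg (by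
        rw [hc]; exact mul_nonneg hr.le (pow_nonneg hq0.le _))]
    rw [hcc]
    apply mul_le_mul_of_nonneg_left _ (by rw [hc]; exact mul_nonneg hr.le (pow_nonneg hq0.le _))
    calc ‖∑ j ∈ Finset.range m, z ^ j‖
        ≤ ∑ j ∈ Finset.range m, ‖z ^ j‖ := norm_sum_le _ _
      _ ≤ ∑ _j ∈ Finset.range m, ‖z‖ ^ m := by
          apply Finset.sum_le_sum
          intro j hj
          rw [norm_pow]
          exact pow_le_pow_right₀ hA1 (Nat.le_of_lt (Finset.mem_range.mp hj))
      _ = (m : ℝ) * ‖z‖ ^ m := by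
          rw [Finset.sum_const, Finset.card_range, nsmul_eq_mul]
  have hfinal : (1 - p + b (m + 1)) * ‖z‖ ^ m ≤
      (b (m + 1 + 1) - b (m + 1)) * ((m : ℝ) * ‖z‖ ^ m) := by
    calc (1 - p + b (m + 1)) * ‖z‖ ^ m ≤ _ := hlhs
      _ = _ := by rw [heq]
      _ ≤ _ := hrhs
  rw [hc] at hfinal
  have : 1 - p + b (m + 1) ≤ r * q ^ (m + 1) * (m : ℝ) := by
    have := hfinal
    rw [show r * q ^ (m + 1) * ((m:ℝ) * ‖z‖ ^ m)
        = r * q ^ (m + 1) * (m:ℝ) * ‖z‖ ^ m by ring] at this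
    exact le_of_mul_le_mul_right this hApos
  linarith [key]
end
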